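/- Let F be a field such that there exists a ring homomorphism from ℝ to F or from the p-adic numbers ℚ_p to F for some prime p. Let w ∈ F_d be a nontrivial word. Define Δ : SL₂(F)^d → F by Δ(g) = (tr(w(g)))² − 4, where tr denotes the matrix trace and w(g) is the value of the word map at the tuple g. Then the set of elements of F that lie in the image of Δ and are squares of nonzero elements of F is infinite. -/

import Mathlib

open Matrix

namespace WDisc

variable {K : Type*} [NormedField K]

/-- upper triangular shear -/
def mA (t : K) (a : ℤ) : Matrix (Fin 2) (Fin 2) K := !![1, a*t; 0, 1]
/-- lower triangular shear -/
def mB (t : K) (b : ℤ) : Matrix (Fin 2) (Fin 2) K := !![1, 0; b*t, 1]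

lemma mA_mulVec (t : K) (a : ℤ) (v : Fin 2 → K) :
    mA t a *ᵥ v = ![v 0 + a*t*v 1, v 1] := by
  funext i
  fin_cases i <;> simp [mA, Matrix.mulVec, dotProduct, Fin.sum_univ_two] <;> ring

lemma mB_mulVec (t : K) (b : ℤ) (v : Fin 2 → K) :
    mB t b *ᵥ v = ![v 0, b*t*v 0 + v 1] := by
  funext i
  fin_cases i <;> simp [mB, Matrix.mulVec, dotProduct, Fin.sum_univ_two] <;> ring

/-- state: first coordinate dominant -/
def stA (R c : ℝ) (v : Fin 2 → K) : Prop := c ≤ ‖v 0‖ ∧ R * ‖v 1‖ ≤ ‖v 0‖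
/-- state: second coordinate dominant -/
def stB (R c : ℝ) (v : Fin 2 → K) : Prop := c ≤ ‖v 1‖ ∧ R * ‖v 0‖ ≤ ‖v 1‖

lemma stepA {R c : ℝ} {t : K} {a : ℤ} {v : Fin 2 → K} (hR : 1 ≤ R)
    (ha : 2*R ≤ ‖(a:K)*t‖) (h : stB R c v) : stA R (R*c) (mA t a *ᵥ v) := by
  obtain ⟨h1, h2⟩ := h
  rw [mA_mulVec]
  have hv0 : ‖v 0‖ ≤ ‖v 1‖ := by nlinarith [norm_nonneg (v 0)]
  have key : R * ‖v 1‖ ≤ ‖v 0 + (a:K)*t*v 1‖ := by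
    have htri : ‖(a:K)*t*v 1‖ - ‖v 0‖ ≤ ‖v 0 + (a:K)*t*v 1‖ := by
      have h := norm_sub_norm_le ((a:K)*t*v 1) (-(v 0))
      rw [sub_neg_eq_add, norm_neg] at h
      rwa [add_comm]
    have hmul : ‖(a:K)*t*v 1‖ = ‖(a:K)*t‖ * ‖v 1‖ := norm_mul _ _
    nlinarith [norm_nonneg (v 1)]
  constructor
  · simp only [Matrix.cons_val_zero]
    calc R * c ≤ R * ‖v 1‖ := by nlinarith
    _ ≤ _ := key
  · simp only [Matrix.cons_val_zero, Matrix.cons_val_one, Matrix.head_cons]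
    exact key

lemma stepB {R c : ℝ} {t : K} {b : ℤ} {v : Fin 2 → K} (hR : 1 ≤ R)
    (hb : 2*R ≤ ‖(b:K)*t‖) (h : stA R c v) : stB R (R*c) (mB t b *ᵥ v) := by
  obtain ⟨h1, h2⟩ := h
  rw [mB_mulVec]
  have hv1 : ‖v 1‖ ≤ ‖v 0‖ := by nlinarith [norm_nonneg (v 1)]
  have key : R * ‖v 0‖ ≤ ‖(b:K)*t*v 0 + v 1‖ := by
    have htri : ‖(b:K)*t*v 0‖ - ‖v 1‖ ≤ ‖(b:K)*t*v 0 + v 1‖ := by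
      have h := norm_sub_norm_le ((b:K)*t*v 0) (-(v 1))
      rw [sub_neg_eq_add, norm_neg] at h
      exact h
    have hmul : ‖(b:K)*t*v 0‖ = ‖(b:K)*t‖ * ‖v 0‖ := norm_mul _ _
    nlinarith [norm_nonneg (v 0)]
  constructor
  · simp only [Matrix.cons_val_one, Matrix.head_cons]
    calc R * c ≤ R * ‖v 0‖ := by nlinarith
    _ ≤ _ := key
  · simp only [Matrix.cons_val_zero, Matrix.cons_val_one, Matrix.head_cons]
    exact key


/-- one syllable pair A^a B^b -/
def syl (t : K) (p : ℤ × ℤ) : Matrix (Fin 2) (Fin 2) K := mA t p.1 * mB t p.2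

/-- alternating product -/
def prodW (t : K) (l : List (ℤ × ℤ)) : Matrix (Fin 2) (Fin 2) K :=
  (l.map (syl t)).prod

@[simp] lemma prodW_nil (t : K) : prodW t [] = 1 := rfl

lemma prodW_cons (t : K) (p : ℤ × ℤ) (l : List (ℤ × ℤ)) :
    prodW t (p :: l) = syl t p * prodW t l := by
  simp [prodW]

lemma prodW_concat (t : K) (p : ℤ × ℤ) (l : List (ℤ × ℤ)) :
    prodW t (l ++ [p]) = prodW t l * syl t p := by
  simp [prodW]

/-- hypothesis on syllable coefficients -/
def GoodSyl (t : K) (R S : ℝ) (p : ℤ × ℤ) : Prop :=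
  2*R ≤ ‖(p.1:K)*t‖ ∧ 2*R ≤ ‖(p.2:K)*t‖ ∧ ‖(p.1:K)*t‖ ≤ S ∧ ‖(p.2:K)*t‖ ≤ S

lemma stepSyl {R c S : ℝ} {t : K} {p : ℤ × ℤ} {v : Fin 2 → K} (hR : 1 ≤ R)
    (hp : GoodSyl t R S p) (h : stA R c v) : stA R (R^2*c) (syl t p *ᵥ v) := by
  have h2 := stepA hR hp.1 (stepB hR hp.2.1 h)
  have e1 : mA t p.1 *ᵥ (mB t p.2 *ᵥ v) = syl t p *ᵥ v := by
    rw [syl, Matrix.mulVec_mulVec]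
  have e2 : R*(R*c) = R^2*c := by ring
  rw [e1, e2] at h2
  exact h2

lemma colA {R S : ℝ} {t : K} (hR : 1 ≤ R) :
    ∀ (l : List (ℤ × ℤ)), (∀ p ∈ l, GoodSyl t R S p) → ∀ {c : ℝ} {v : Fin 2 → K},
      stA R c v → stA R (R^(2*l.length)*c) (prodW t l *ᵥ v) := by
  intro l
  induction l with
  | nil => intro _ c v h; simpa using h
  | cons p l ih =>
      intro hl c v h
      have h1 := ih (fun q hq => hl q (List.mem_cons_of_mem _ hq)) h
      have h2 := stepSyl hR (hl p (List.mem_cons_self)) h1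
      have e1 : syl t p *ᵥ (prodW t l *ᵥ v) = prodW t (p :: l) *ᵥ v := by
        rw [prodW_cons, Matrix.mulVec_mulVec]
      have e2 : R^2*(R^(2*l.length)*c) = R^(2*(p::l).length)*c := by
        rw [List.length_cons, Nat.mul_add, pow_add]; ring
      rw [e1, e2] at h2
      exact h2

lemma ub_syl {S : ℝ} {t : K} {p : ℤ × ℤ} {v : Fin 2 → K} {C : ℝ}
    (hp : ‖(p.1:K)*t‖ ≤ S ∧ ‖(p.2:K)*t‖ ≤ S)
    (h0 : ‖v 0‖ ≤ C) (h1 : ‖v 1‖ ≤ C) :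
    ‖(syl t p *ᵥ v) 0‖ ≤ (S+1)^2*C ∧ ‖(syl t p *ᵥ v) 1‖ ≤ (S+1)^2*C := by
  have hS : 0 ≤ S := le_trans (norm_nonneg _) hp.1
  have hC : 0 ≤ C := le_trans (norm_nonneg _) h0
  have hb : ‖(mB t p.2 *ᵥ v) 0‖ ≤ (S+1)*C ∧ ‖(mB t p.2 *ᵥ v) 1‖ ≤ (S+1)*C := by
    rw [mB_mulVec]
    constructor
    · simpa using by nlinarith [mul_nonneg hS hC]
    · simp only [Matrix.cons_val_one, Matrix.head_cons]
      calc ‖(p.2:K)*t*v 0 + v 1‖ ≤ ‖(p.2:K)*t*v 0‖ + ‖v 1‖ := norm_add_le _ _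
      _ = ‖(p.2:K)*t‖*‖v 0‖ + ‖v 1‖ := by rw [norm_mul]
      _ ≤ (S+1)*C := by nlinarith [norm_nonneg ((p.2:K)*t), norm_nonneg (v 0)]
  have ha : ‖(mA t p.1 *ᵥ (mB t p.2 *ᵥ v)) 0‖ ≤ (S+1)*((S+1)*C) ∧
      ‖(mA t p.1 *ᵥ (mB t p.2 *ᵥ v)) 1‖ ≤ (S+1)*((S+1)*C) := by
    rw [mA_mulVec]
    constructor
    · simp only [Matrix.cons_val_zero]
      calc ‖(mB t p.2 *ᵥ v) 0 + (p.1:K)*t*(mB t p.2 *ᵥ v) 1‖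
          ≤ ‖(mB t p.2 *ᵥ v) 0‖ + ‖(p.1:K)*t‖*‖(mB t p.2 *ᵥ v) 1‖ := by
            refine le_trans (norm_add_le _ _) ?_
            rw [norm_mul]
      _ ≤ (S+1)*((S+1)*C) := by nlinarith [norm_nonneg ((p.1:K)*t), norm_nonneg ((mB t p.2 *ᵥ v) 1), hb.1, hb.2]
    · simp only [Matrix.cons_val_one, Matrix.head_cons, Matrix.cons_val_zero]; nlinarith [hb.2, mul_nonneg hS (mul_nonneg (by linarith : (0:ℝ) ≤ S+1) hC)]
  rw [syl, ← Matrix.mulVec_mulVec]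
  constructor
  · calc ‖(mA t p.1 *ᵥ (mB t p.2 *ᵥ v)) 0‖ ≤ (S+1)*((S+1)*C) := ha.1
    _ = (S+1)^2*C := by ring
  · calc ‖(mA t p.1 *ᵥ (mB t p.2 *ᵥ v)) 1‖ ≤ (S+1)*((S+1)*C) := ha.2
    _ = (S+1)^2*C := by ring

lemma ubW {S : ℝ} {t : K} (hS : 0 ≤ S) :
    ∀ (l : List (ℤ × ℤ)), (∀ p ∈ l, ‖(p.1:K)*t‖ ≤ S ∧ ‖(p.2:K)*t‖ ≤ S) →
      ∀ {C : ℝ} {v : Fin 2 → K}, ‖v 0‖ ≤ C → ‖v 1‖ ≤ C →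
      ‖(prodW t l *ᵥ v) 0‖ ≤ (S+1)^(2*l.length)*C ∧
      ‖(prodW t l *ᵥ v) 1‖ ≤ (S+1)^(2*l.length)*C := by
  intro l
  induction l with
  | nil => intro _ C v h0 h1; constructor <;> simpa using by assumption
  | cons p l ih =>
      intro hl C v h0 h1
      have h1' := ih (fun q hq => hl q (List.mem_cons_of_mem _ hq)) h0 h1
      have h2 := ub_syl (hl p (List.mem_cons_self)) h1'.1 h1'.2
      rw [prodW_cons, ← Matrix.mulVec_mulVec]
      have he : (S+1)^2*((S+1)^(2*l.length)*C) = (S+1)^(2*(p::l).length)*C := by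
        rw [List.length_cons]; ring
      rw [← he]
      exact h2


lemma mulVec_e0 (M : Matrix (Fin 2) (Fin 2) K) : M *ᵥ ![1,0] = ![M 0 0, M 1 0] := by
  funext i; fin_cases i <;> simp [Matrix.mulVec, dotProduct, Fin.sum_univ_two]

lemma mulVec_e1 (M : Matrix (Fin 2) (Fin 2) K) : M *ᵥ ![0,1] = ![M 0 1, M 1 1] := by
  funext i; fin_cases i <;> simp [Matrix.mulVec, dotProduct, Fin.sum_univ_two]

lemma trace_prodW {R S : ℝ} {t : K} (hR : 1 ≤ R) (l : List (ℤ × ℤ)) (hl : l ≠ [])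
    (hyp : ∀ p ∈ l, GoodSyl t R S p) :
    2*R^(2*l.length) - (S+1)^(2*l.length)/R ≤ ‖(prodW t l).trace‖ := by
  have hR0 : (0:ℝ) < R := lt_of_lt_of_le one_pos hR
  obtain ⟨l₁, p, rfl⟩ : ∃ l₁ p, l = l₁ ++ [p] := by
    rcases List.eq_nil_or_concat l with h | ⟨l₁, p, h⟩
    · exact absurd h hl
    · exact ⟨l₁, p, by simpa [List.concat_eq_append] using h⟩
  have hp := hyp p (by simp)
  have hyp₁ : ∀ q ∈ l₁, GoodSyl t R S q := fun q hq => hyp q (by simp [hq])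
  have hS : 0 ≤ S := le_trans (norm_nonneg _) hp.2.2.1
  set M := prodW t (l₁ ++ [p]) with hM
  -- column 0
  have hcol0 : stA R (2*R^(2*(l₁ ++ [p]).length)) (M *ᵥ ![1,0]) := by
    have e : M *ᵥ ![1,0] = prodW t l₁ *ᵥ (mA t p.1 *ᵥ (mB t p.2 *ᵥ ![1,0])) := by
      rw [Matrix.mulVec_mulVec, Matrix.mulVec_mulVec, hM, prodW_concat, syl,
        Matrix.mul_assoc]
    have s0 : stB R (2*R) (mB t p.2 *ᵥ ![1,0]) := by
      rw [mB_mulVec]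
      refine ⟨?_, ?_⟩
      · simpa using by
          have := hp.2.1
          have : 2*R ≤ ‖(p.2:K)*t*1‖ := by rwa [mul_one]
          simpa [norm_mul] using this
      · simp only [Matrix.cons_val_zero, Matrix.cons_val_one, Matrix.head_cons]
        have h1 : ‖(1:K)‖ = 1 := norm_one
        have h2 : ‖(p.2:K)*t*1 + 0‖ = ‖(p.2:K)*t‖ := by simp
        rw [h1, h2, mul_one]
        linarith [hp.2.1]
    have s1 := stepA hR hp.1 s0
    have s2 := colA hR l₁ hyp₁ s1
    rw [← e] at s2
    have e2 : R ^ (2 * l₁.length) * (R * (2 * R)) = 2*R^(2*(l₁ ++ [p]).length) := by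
      simp only [List.length_append, List.length_cons, List.length_nil]
      rw [Nat.mul_add, pow_add]; ring
    rwa [e2] at s2
  -- column 1
  have hcol1 : stA R (2*R^(2*(l₁ ++ [p]).length-1)) (M *ᵥ ![0,1]) := by
    have e : M *ᵥ ![0,1] = prodW t l₁ *ᵥ (mA t p.1 *ᵥ (mB t p.2 *ᵥ ![0,1])) := by
      rw [Matrix.mulVec_mulVec, Matrix.mulVec_mulVec, hM, prodW_concat, syl,
        Matrix.mul_assoc]
    have s0 : mB t p.2 *ᵥ ![0,1] = ![0,1] := by
      rw [mB_mulVec]; simp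
    have s1 : stA R (2*R) (mA t p.1 *ᵥ (mB t p.2 *ᵥ ![0,1])) := by
      rw [s0, mA_mulVec]
      refine ⟨?_, ?_⟩
      · simpa using by
          have : 2*R ≤ ‖(p.1:K)*t*1‖ := by rw [mul_one]; exact hp.1
          simpa using this
      · simp only [Matrix.cons_val_zero, Matrix.cons_val_one, Matrix.head_cons]
        have : ‖(0:K) + (p.1:K)*t*1‖ = ‖(p.1:K)*t‖ := by simp
        rw [this, norm_one, mul_one]
        linarith [hp.1]
    have s2 := colA hR l₁ hyp₁ s1
    rw [← e] at s2
    have e2 : R ^ (2 * l₁.length) * (2 * R) = 2*R^(2*(l₁ ++ [p]).length-1) := by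
      simp only [List.length_append, List.length_cons, List.length_nil]
      have : 2 * (l₁.length + (0+1)) - 1 = 2*l₁.length + 1 := by omega
      rw [this, pow_add]; ring
    rwa [e2] at s2
  -- upper bound on column 1
  have hub : ‖(M *ᵥ ![0,1]) 0‖ ≤ (S+1)^(2*(l₁ ++ [p]).length)*1 ∧
      ‖(M *ᵥ ![0,1]) 1‖ ≤ (S+1)^(2*(l₁ ++ [p]).length)*1 := by
    refine ubW hS _ (fun q hq => ⟨(hyp q hq).2.2.1, (hyp q hq).2.2.2⟩) ?_ ?_
    · simp
    · simp
  -- entries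
  rw [mulVec_e0] at hcol0
  rw [mulVec_e1] at hcol1 hub
  simp only [Matrix.cons_val_zero, Matrix.cons_val_one, Matrix.head_cons] at hcol0 hcol1 hub
  -- ‖M 1 1‖ ≤ (S+1)^(2k)/R
  have h11 : ‖M 1 1‖ ≤ (S+1)^(2*(l₁ ++ [p]).length)/R := by
    have := hcol1.2
    have h01 := hub.1
    rw [le_div_iff₀ hR0]
    calc ‖M 1 1‖ * R = R * ‖M 1 1‖ := by ring
    _ ≤ ‖M 0 1‖ := hcol1.2
    _ ≤ (S+1)^(2*(l₁ ++ [p]).length) := by linarith [hub.1]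
  have h00 : 2*R^(2*(l₁ ++ [p]).length) ≤ ‖M 0 0‖ := hcol0.1
  have htr : (M).trace = M 0 0 + M 1 1 := Matrix.trace_fin_two M
  rw [htr]
  have : ‖M 0 0‖ - ‖M 1 1‖ ≤ ‖M 0 0 + M 1 1‖ := by
    have h := norm_sub_norm_le (M 0 0) (-(M 1 1))
    rw [sub_neg_eq_add, norm_neg] at h
    exact h
  linarith


/-! ### SL₂ level -/

abbrev SL2 (K : Type*) [Field K] := Matrix.SpecialLinearGroup (Fin 2) K

variable {F : Type*} [Field F]

def sA (t : F) (a : ℤ) : SL2 F :=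
  ⟨!![1, a*t; 0, 1], by simp [Matrix.det_fin_two_of]⟩

def sB (t : F) (b : ℤ) : SL2 F :=
  ⟨!![1, 0; b*t, 1], by simp [Matrix.det_fin_two_of]⟩

@[simp] lemma sA_coe (t : F) (a : ℤ) :
    ((sA t a : SL2 F) : Matrix (Fin 2) (Fin 2) F) = !![1, a*t; 0, 1] := rfl
@[simp] lemma sB_coe (t : F) (b : ℤ) :
    ((sB t b : SL2 F) : Matrix (Fin 2) (Fin 2) F) = !![1, 0; b*t, 1] := rfl

lemma sA_mul (t : F) (a b : ℤ) : sA t a * sA t b = sA t (a+b) := by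
  apply Subtype.ext
  push_cast
  rw [Matrix.SpecialLinearGroup.coe_mul, sA_coe, sA_coe, sA_coe, Matrix.mul_fin_two]
  congr 1 <;> push_cast <;> ring

lemma sB_mul (t : F) (a b : ℤ) : sB t a * sB t b = sB t (a+b) := by
  apply Subtype.ext
  rw [Matrix.SpecialLinearGroup.coe_mul, sB_coe, sB_coe, sB_coe, Matrix.mul_fin_two]
  congr 1 <;> push_cast <;> ring

lemma sA_zero (t : F) : sA t 0 = 1 := by
  apply Subtype.ext
  rw [sA_coe]
  simp [Matrix.SpecialLinearGroup.coe_one, Matrix.one_fin_two]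

lemma sB_zero (t : F) : sB t 0 = 1 := by
  apply Subtype.ext
  rw [sB_coe]
  simp [Matrix.SpecialLinearGroup.coe_one, Matrix.one_fin_two]

lemma sA_inv (t : F) (a : ℤ) : (sA t a)⁻¹ = sA t (-a) := by
  apply inv_eq_of_mul_eq_one_right
  rw [sA_mul]
  simp [sA_zero]

lemma sB_inv (t : F) (b : ℤ) : (sB t b)⁻¹ = sB t (-b) := by
  apply inv_eq_of_mul_eq_one_right
  rw [sB_mul]
  simp [sB_zero]

/-- SL₂ syllable -/
def sSyl (t : F) (p : ℤ × ℤ) : SL2 F := sA t p.1 * sB t p.2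

/-- SL₂ alternating product -/
def sProd (t : F) (l : List (ℤ × ℤ)) : SL2 F := (l.map (sSyl t)).prod

lemma sProd_cons (t : F) (p : ℤ × ℤ) (l : List (ℤ × ℤ)) :
    sProd t (p :: l) = sSyl t p * sProd t l := by simp [sProd]

lemma sProd_coe {K : Type*} [NormedField K] (t : K) (l : List (ℤ × ℤ)) :
    ((sProd t l : SL2 K) : Matrix (Fin 2) (Fin 2) K) = prodW t l := by
  induction l with
  | nil => simp [sProd, prodW]
  | cons p l ih =>
      rw [sProd_cons, prodW_cons, Matrix.SpecialLinearGroup.coe_mul, ih]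
      congr 1


/-! ### letters and word products -/

variable {d : ℕ}

/-- signed index of a letter -/
def ltr (p : Fin d × Bool) : ℤ := cond p.2 ((p.1:ℤ)+1) (-((p.1:ℤ)+1))

/-- sign of a letter -/
def sgn (p : Fin d × Bool) : ℤ := cond p.2 1 (-1)

/-- matrix of one letter -/
def letterM (t : F) (p : Fin d × Bool) : SL2 F :=
  sB t (ltr p) * sA t (sgn p) * sB t (ltr p)

lemma letterM_def (t : F) (p : Fin d × Bool) :
    letterM t p = sB t (ltr p) * sA t (sgn p) * sB t (ltr p) := rfl

/-- the generator tuple -/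
def gens (t : F) : Fin d → SL2 F := fun i => sB t ((i:ℤ)+1) * sA t 1 * sB t ((i:ℤ)+1)

lemma gens_def (t : F) (i : Fin d) :
    gens t i = sB t ((i:ℤ)+1) * sA t 1 * sB t ((i:ℤ)+1) := rfl

lemma ltr_true (i : Fin d) : ltr (i, true) = (i:ℤ)+1 := rfl
lemma ltr_false (i : Fin d) : ltr (i, false) = -((i:ℤ)+1) := rfl
lemma sgn_true (i : Fin d) : sgn (i, true) = 1 := rfl
lemma sgn_false (i : Fin d) : sgn (i, false) = -1 := rfl

lemma letterM_eq (t : F) (p : Fin d × Bool) :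
    letterM t p = cond p.2 (gens t p.1) (gens t p.1)⁻¹ := by
  obtain ⟨i, b⟩ := p
  cases b
  · show letterM t (i, false) = (gens t i)⁻¹
    rw [letterM_def, gens_def, ltr_false, sgn_false,
      _root_.mul_inv_rev, _root_.mul_inv_rev, sA_inv, sB_inv, mul_assoc]
  · show letterM t (i, true) = gens t i
    rw [letterM_def, gens_def, ltr_true, sgn_true]

/-- syllable list of a letter list, with closing twist `c` -/
def go : List (Fin d × Bool) → ℤ → List (ℤ × ℤ)
  | [], _ => []
  | [p], c => [(sgn p, ltr p + c)]
  | p :: q :: rest, c => (sgn p, ltr p + ltr q) :: go (q :: rest) c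

lemma go_single (p : Fin d × Bool) (c : ℤ) : go [p] c = [(sgn p, ltr p + c)] := rfl
lemma go_cons (p q : Fin d × Bool) (rest : List (Fin d × Bool)) (c : ℤ) :
    go (p :: q :: rest) c = (sgn p, ltr p + ltr q) :: go (q :: rest) c := rfl

lemma go_length : ∀ (L : List (Fin d × Bool)) (c : ℤ), (go L c).length = L.length
  | [], _ => rfl
  | [_], _ => rfl
  | p :: q :: rest, c => by
      rw [go_cons, List.length_cons, go_length (q :: rest) c]
      rfl

lemma sSyl_def (t : F) (p : ℤ × ℤ) : sSyl t p = sA t p.1 * sB t p.2 := rfl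

lemma keyProd (t : F) (L : List (Fin d × Bool)) :
    ∀ (c : ℤ) (p : Fin d × Bool), L.head? = some p →
      (L.map (letterM t)).prod * sB t c = sB t (ltr p) * sProd t (go L c) := by
  induction L with
  | nil => intro c p h; simp at h
  | cons q L ih =>
    intro c p h
    obtain rfl : q = p := by simpa using h
    cases L with
    | nil =>
        rw [List.map_cons, List.map_nil, List.prod_cons, List.prod_nil, mul_one,
          letterM_def, go_single, sProd, List.map_cons, List.map_nil, List.prod_cons,
          List.prod_nil, mul_one, sSyl_def, ← sB_mul t (ltr q) c]
        simp only [mul_assoc]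
    | cons r rest =>
        have ih' := ih c r rfl
        rw [List.map_cons, List.prod_cons, mul_assoc, ih', go_cons, sProd_cons, sSyl_def,
          letterM_def, ← sB_mul t (ltr q) (ltr r)]
        simp only [mul_assoc]

/-- the word value is a conjugate of the alternating product -/
lemma word_eq_conj (t : F) (w : FreeGroup (Fin d)) (p : Fin d × Bool)
    (h : w.toWord.head? = some p) :
    FreeGroup.lift (gens t) w =
      sB t (ltr p) * sProd t (go w.toWord (ltr p)) * (sB t (ltr p))⁻¹ := by
  have h1 : FreeGroup.lift (gens t) w = (w.toWord.map (letterM t)).prod := by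
    conv_lhs => rw [← FreeGroup.mk_toWord (x := w)]
    rw [FreeGroup.lift_mk]
    congr 1
    apply List.map_congr_left
    intro q hq
    rw [letterM_eq]
  have h2 := keyProd t w.toWord (ltr p) p h
  rw [h1, eq_mul_inv_iff_mul_eq, h2]

lemma trace_conj (a b : SL2 F) :
    Matrix.trace ((a * b * a⁻¹ : SL2 F) : Matrix (Fin 2) (Fin 2) F) =
    Matrix.trace ((b : SL2 F) : Matrix (Fin 2) (Fin 2) F) := by
  rw [Matrix.SpecialLinearGroup.coe_mul, Matrix.trace_mul_comm,
    ← Matrix.SpecialLinearGroup.coe_mul, inv_mul_cancel_left]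


/-! ### reduced words -/

/-- no cancelling adjacent pair -/
def NR {α : Type*} (L : List (α × Bool)) : Prop :=
  ∀ (L₂ L₃ : List (α × Bool)) (x : α) (b : Bool), L ≠ L₂ ++ (x, b) :: (x, !b) :: L₃

lemma nr_toWord {α : Type*} [DecidableEq α] (x : FreeGroup α) : NR x.toWord := by
  intro L₂ L₃ a b h
  exact FreeGroup.reduce.not (L₁ := x.toWord) (by rw [FreeGroup.reduce_toWord]; exact h)

lemma NR.tail {α : Type*} {p : α × Bool} {L : List (α × Bool)} (h : NR (p :: L)) : NR L := by
  intro L₂ L₃ x b hL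
  exact h (p :: L₂) L₃ x b (by rw [hL]; rfl)

lemma NR.head {α : Type*} {p q : α × Bool} {L : List (α × Bool)} (h : NR (p :: q :: L)) :
    q ≠ (p.1, !p.2) := by
  intro hq
  exact h [] L p.1 p.2 (by rw [hq]; rfl)

lemma NR.concat {α : Type*} {p : α × Bool} {L : List (α × Bool)} (h : NR (L ++ [p])) : NR L := by
  intro L₂ L₃ x b hL
  exact h L₂ (L₃ ++ [p]) x b (by rw [hL]; simp)

lemma NR.reduce_eq {α : Type*} [DecidableEq α] :
    ∀ {L : List (α × Bool)}, NR L → FreeGroup.reduce L = L := by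
  intro L
  induction L with
  | nil => intro _; rfl
  | cons x L ih =>
      intro h
      rw [FreeGroup.reduce.cons]
      rw [ih h.tail]
      cases L with
      | nil => rfl
      | cons y L' =>
          have hy := h.head
          simp only
          rw [if_neg]
          intro ⟨h1, h2⟩
          exact hy (by
            obtain ⟨y1, y2⟩ := y
            obtain ⟨x1, x2⟩ := x
            simp only at h1 h2
            simp [← h1, h2])

/-- adjacent letters cancel iff their `ltr` values sum to zero -/
lemma eq_inv_of_ltr_add_eq_zero {d : ℕ} (p q : Fin d × Bool) (h : ltr p + ltr q = 0) :
    q = (p.1, !p.2) := by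
  obtain ⟨i, b⟩ := p
  obtain ⟨j, c⟩ := q
  cases b <;> cases c <;> simp only [ltr_true, ltr_false] at h
  · exfalso; omega
  · have h1 : (j:ℤ) = (i:ℤ) := by omega
    have h2 : j = i := Fin.ext (by exact_mod_cast h1)
    subst h2; rfl
  · have h1 : (j:ℤ) = (i:ℤ) := by omega
    have h2 : j = i := Fin.ext (by exact_mod_cast h1)
    subst h2; rfl
  · exfalso; omega

lemma abs_ltr_le {d : ℕ} (p : Fin d × Bool) : |ltr p| ≤ (d:ℤ) := by
  obtain ⟨i, b⟩ := p
  have := i.isLt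
  cases b
  · rw [ltr_false]; rw [abs_neg, abs_of_pos (by positivity)]; omega
  · rw [ltr_true]; rw [abs_of_pos (by positivity)]; omega

lemma sgn_eq {d : ℕ} (p : Fin d × Bool) : sgn p = 1 ∨ sgn p = -1 := by
  obtain ⟨i, b⟩ := p; cases b
  · right; rfl
  · left; rfl

/-- property of syllables in `go` -/
lemma go_good {d : ℕ} :
    ∀ (L : List (Fin d × Bool)) (c : ℤ), L ≠ [] → NR L →
      (∀ q, L.getLast? = some q → ltr q + c ≠ 0) → |c| ≤ (d:ℤ) →
      ∀ x ∈ go L c, (x.1 = 1 ∨ x.1 = -1) ∧ x.2 ≠ 0 ∧ |x.2| ≤ 2*(d:ℤ)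
  | [], _, h, _, _, _ => absurd rfl h
  | [p], c, _, _, hlast, hc => by
      intro x hx
      rw [go_single] at hx
      simp only [List.mem_singleton] at hx
      subst hx
      refine ⟨sgn_eq p, hlast p rfl, ?_⟩
      have h1 := abs_ltr_le p
      have := abs_add_le (ltr p) c
      simp only
      omega
  | p :: q :: rest, c, _, hnr, hlast, hc => by
      intro x hx
      rw [go_cons] at hx
      rcases List.mem_cons.mp hx with hx | hx
      · subst hx
        refine ⟨sgn_eq p, ?_, ?_⟩
        · intro h0
          exact hnr.head (eq_inv_of_ltr_add_eq_zero p q h0)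
        · have h1 := abs_ltr_le p
          have h2 := abs_ltr_le q
          have := abs_add_le (ltr p) (ltr q)
          simp only
          omega
      · refine go_good (q :: rest) c (by simp) hnr.tail ?_ hc x hx
        intro r hr
        refine hlast r ?_
        rw [List.getLast?_cons_cons]
        exact hr


/-! ### cyclic reduction -/

/-- cyclically reduced -/
def CycRed {d : ℕ} (v : FreeGroup (Fin d)) : Prop :=
  ∀ p q, v.toWord.head? = some p → v.toWord.getLast? = some q → ltr q + ltr p ≠ 0

lemma cyc_red_aux {d : ℕ} (n : ℕ) :
    ∀ w : FreeGroup (Fin d), w.toWord.length ≤ n → w ≠ 1 →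
      ∃ u v : FreeGroup (Fin d), w = u * v * u⁻¹ ∧ v ≠ 1 ∧ CycRed v := by
  induction n with
  | zero =>
      intro w hl hw
      exfalso
      apply hw
      rw [← FreeGroup.toWord_eq_nil_iff]
      exact List.length_eq_zero_iff.mp (Nat.le_zero.mp hl)
  | succ n ih =>
      intro w hl hw
      by_cases hcr : CycRed w
      · exact ⟨1, w, by simp, hw, hcr⟩
      · unfold CycRed at hcr
        push_neg at hcr
        obtain ⟨p, q, hp, hq, hpq⟩ := hcr
        have hq' : q = (p.1, !p.2) := eq_inv_of_ltr_add_eq_zero p q (by linarith [hpq])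
        -- structure of the word
        obtain ⟨L', hL'⟩ : ∃ L', w.toWord = p :: L' := by
          cases h : w.toWord with
          | nil => rw [h] at hp; simp at hp
          | cons a L' =>
              rw [h] at hp
              simp only [List.head?_cons, Option.some.injEq] at hp
              exact ⟨L', by rw [hp]⟩
        have hNR : NR w.toWord := nr_toWord w
        have hL'ne : L' ≠ [] := by
          intro h0
          rw [h0] at hL'
          have hqp : q = p := by
            rw [hL'] at hq
            simp only [List.getLast?_singleton, Option.some.injEq] at hq
            exact hq.symm
          subst hqp
          obtain ⟨i, b⟩ := q
          cases b <;> simp [ltr_true, ltr_false] at hpq <;> omega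
        obtain ⟨mid, r, hL'split⟩ : ∃ mid r, L' = mid ++ [r] := by
          rcases List.eq_nil_or_concat L' with h | ⟨mid, r, h⟩
          · exact absurd h hL'ne
          · exact ⟨mid, r, by simpa [List.concat_eq_append] using h⟩
        have hword : w.toWord = (p :: mid) ++ [r] := by rw [hL', hL'split]; rfl
        have hrq : r = q := by
          rw [hword, List.getLast?_concat] at hq
          exact (Option.some.injEq _ _ ▸ hq :)
        subst hrq
        -- mid is reduced and nonempty
        have hNRmid : NR mid := by
          have h1 : NR ((p :: mid) ++ [r]) := by rwa [hword] at hNR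
          exact (NR.concat h1).tail
        have hmidne : mid ≠ [] := by
          intro h0
          apply hNR [] [] p.1 p.2
          rw [hword, h0, hq']
          rfl
        -- the conjugating element and the core
        refine ?_
        classical
        set u := FreeGroup.mk [p] with hu
        set v := FreeGroup.mk mid with hv
        have hvword : v.toWord = mid := by
          rw [hv, FreeGroup.toWord_mk, NR.reduce_eq hNRmid]
        have hvne : v ≠ 1 := fun h0 =>
          hmidne (by rw [← hvword, h0, FreeGroup.toWord_one])
        have hwuv : w = u * v * u⁻¹ := by
          have h1 : u⁻¹ = FreeGroup.mk [r] := by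
            rw [hu, FreeGroup.inv_mk]
            congr 1
            rw [hq']
            rfl
          rw [h1, hu, hv, FreeGroup.mul_mk, FreeGroup.mul_mk, ← FreeGroup.mk_toWord (x := w), hword]
          rfl
        have hlen : v.toWord.length ≤ n := by
          have h1 : w.toWord.length = mid.length + 2 := by
            rw [hword]; simp
          rw [hvword]
          omega
        obtain ⟨u', v', huv', hv'ne, hv'cr⟩ := ih v hlen hvne
        refine ⟨u * u', v', ?_, hv'ne, hv'cr⟩
        rw [hwuv, huv']
        group


/-! ### main trace bound -/

lemma trace_big {K : Type*} [NormedField K] {d : ℕ} (w : FreeGroup (Fin d)) (hw : w ≠ 1)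
    (hcr : CycRed w) (t : K)
    (hint : ∀ m : ℤ, m ≠ 0 → |m| ≤ 2*(d:ℤ) →
      1/(2*(d:ℝ)) ≤ ‖(m:K)‖ ∧ ‖(m:K)‖ ≤ 2*(d:ℝ))
    (hT : (6*(2*(d:ℝ))^2)^(4*w.toWord.length+2) ≤ ‖t‖) :
    (‖t‖/(4*(d:ℝ)))^2 ≤
      ‖Matrix.trace ((FreeGroup.lift (gens t) w : SL2 K) : Matrix (Fin 2) (Fin 2) K)‖ := by
  classical
  -- setup
  have hLne : w.toWord ≠ [] := fun h => hw (FreeGroup.toWord_eq_nil_iff.mp h)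
  obtain ⟨p, L', hL⟩ : ∃ p L', w.toWord = p :: L' := by
    cases h : w.toWord with
    | nil => exact absurd h hLne
    | cons a L' => exact ⟨a, L', rfl⟩
  have hp : w.toWord.head? = some p := by rw [hL]; rfl
  have hd1 : 1 ≤ d := p.1.pos
  set D : ℝ := 2*(d:ℝ) with hD
  have hD2 : 2 ≤ D := by
    rw [hD]
    have : (1:ℝ) ≤ (d:ℝ) := by exact_mod_cast hd1
    linarith
  have hD0 : 0 < D := by linarith
  set k := w.toWord.length with hk
  have hk1 : 1 ≤ k := by rw [hk, hL]; simp
  have hbase : (1:ℝ) ≤ 6*D^2 := by nlinarith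
  have ht1 : 6*D^2 ≤ ‖t‖ := le_trans (le_self_pow₀ hbase (by omega)) hT
  have ht0 : 0 < ‖t‖ := by nlinarith
  set R : ℝ := ‖t‖/(2*D) with hR
  set S : ℝ := D*‖t‖ with hS
  have hR3 : 3 ≤ R := by
    rw [hR, le_div_iff₀ (by linarith)]
    nlinarith
  have hR1 : 1 ≤ R := by linarith
  have hR0 : 0 < R := by linarith
  -- syllables
  set l := go w.toWord (ltr p) with hl
  have hlen : l.length = k := by rw [hl, go_length, hk]
  have hlne : l ≠ [] := by
    intro h
    have := go_length w.toWord (ltr p)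
    rw [← hl, h] at this
    simp only [List.length_nil] at this
    rw [hL] at this
    simp at this
  have hgood : ∀ x ∈ l, (x.1 = 1 ∨ x.1 = -1) ∧ x.2 ≠ 0 ∧ |x.2| ≤ 2*(d:ℤ) := by
    refine go_good w.toWord (ltr p) hLne (nr_toWord w) ?_ (abs_ltr_le p)
    intro q hq
    exact hcr p q hp hq
  have hgs : ∀ x ∈ l, GoodSyl t R S x := by
    intro x hx
    obtain ⟨h1, h2, h3⟩ := hgood x hx
    have hx1 : ‖((x.1:ℤ):K)*t‖ = ‖t‖ := by
      rcases h1 with h | h <;> rw [h] <;> simp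
    have hx2l : 1/D ≤ ‖((x.2:ℤ):K)‖ := (hint x.2 h2 h3).1
    have hx2u : ‖((x.2:ℤ):K)‖ ≤ D := (hint x.2 h2 h3).2
    have hx2 : ‖((x.2:ℤ):K)*t‖ = ‖((x.2:ℤ):K)‖*‖t‖ := norm_mul _ _
    refine ⟨?_, ?_, ?_, ?_⟩
    · rw [hx1, hR]
      have e : 2*(‖t‖/(2*D)) = ‖t‖/D := by field_simp
      rw [e]
      exact div_le_self ht0.le (by linarith)
    · rw [hx2]
      have h2R : 2*R = ‖t‖/D := by rw [hR]; field_simp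
      rw [h2R, div_le_iff₀ hD0]
      have h0 : (0:ℝ) ≤ ‖t‖*D := by positivity
      have h' := mul_le_mul_of_nonneg_right hx2l h0
      calc ‖t‖ = 1/D*(‖t‖*D) := by field_simp
      _ ≤ ‖((x.2:ℤ):K)‖*(‖t‖*D) := h'
      _ = ‖((x.2:ℤ):K)‖*‖t‖*D := by ring
    · rw [hx1, hS]; nlinarith
    · rw [hx2, hS]; nlinarith
  -- trace estimate
  have htr := trace_prodW hR1 l hlne hgs
  rw [hlen] at htr
  -- identify traces
  have hweq := word_eq_conj t w p hp
  have htreq : Matrix.trace ((FreeGroup.lift (gens t) w : SL2 K) : Matrix (Fin 2) (Fin 2) K)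
      = (prodW t l).trace := by
    rw [hweq, trace_conj, sProd_coe, hl]
  rw [htreq]
  -- numeric chain
  have hSnn : 0 ≤ S := by rw [hS]; positivity
  have key : (S+1)^(2*k) ≤ R^(2*k+1) := by
    have h1 : S+1 ≤ 2*D*‖t‖ := by rw [hS]; nlinarith
    have h2 : (S+1)^(2*k) ≤ (2*D*‖t‖)^(2*k) :=
      pow_le_pow_left₀ (by linarith) h1 _
    refine le_trans h2 ?_
    rw [hR, div_pow, le_div_iff₀ (by positivity)]
    have e1 : (2*D*‖t‖)^(2*k) * (2*D)^(2*k+1) = (2*D)^(4*k+1) * ‖t‖^(2*k) := by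
      rw [mul_pow, show 4*k+1 = 2*k + (2*k+1) by omega, pow_add]
      ring
    have e2 : ‖t‖^(2*k+1) = ‖t‖^(2*k) * ‖t‖ := by rw [pow_succ]
    rw [e1, e2]
    have h3 : (2*D)^(4*k+1) ≤ ‖t‖ := by
      have h4 : (2*D)^(4*k+1) ≤ (6*D^2)^(4*k+1) :=
        pow_le_pow_left₀ (by linarith) (by nlinarith) _
      have h5 : (6*D^2)^(4*k+1) ≤ (6*D^2)^(4*k+2) :=
        pow_le_pow_right₀ hbase (by omega)
      exact le_trans h4 (le_trans h5 hT)
    calc (2*D)^(4*k+1) * ‖t‖^(2*k) ≤ ‖t‖ * ‖t‖^(2*k) := by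
          have := pow_pos ht0 (2*k)
          nlinarith
    _ = ‖t‖^(2*k) * ‖t‖ := by ring
  have hfin : R^2 ≤ 2*R^(2*k) - (S+1)^(2*k)/R := by
    have h1 : (S+1)^(2*k)/R ≤ R^(2*k) := by
      rw [div_le_iff₀ hR0, ← pow_succ]
      exact key
    have h2 : R^2 ≤ R^(2*k) := pow_le_pow_right₀ hR1 (by omega)
    linarith
  have heq : (‖t‖/(4*(d:ℝ)))^2 = R^2 := by
    rw [hR, hD]
    have e : (2:ℝ)*(2*(d:ℝ)) = 4*(d:ℝ) := by ring
    rw [e]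
  rw [heq]
  linarith

end WDisc

/-- For a word `w ∈ F_d`, the discriminant map `Δ : SL₂(F)^d → F`,
`Δ(g) = (tr w(g))² - 4`. -/
noncomputable def wordDiscriminant {F : Type*} [Field F] {d : ℕ} (w : FreeGroup (Fin d))
    (g : Fin d → Matrix.SpecialLinearGroup (Fin 2) F) : F :=
  (Matrix.trace
    ((FreeGroup.lift g w : Matrix.SpecialLinearGroup (Fin 2) F) : Matrix (Fin 2) (Fin 2) F)) ^ 2
    - 4

namespace WDisc

lemma wordDiscriminant_conj {F : Type*} [Field F] {d : ℕ} (u v : FreeGroup (Fin d)) :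
    wordDiscriminant (u * v * u⁻¹) = wordDiscriminant (F := F) v := by
  funext g
  unfold wordDiscriminant
  rw [_root_.map_mul, _root_.map_mul, _root_.map_inv, trace_conj]

lemma wordDiscriminant_map {K F : Type*} [Field K] [Field F] (φ : K →+* F) {d : ℕ}
    (w : FreeGroup (Fin d)) (g : Fin d → SL2 K) :
    wordDiscriminant w (fun i => Matrix.SpecialLinearGroup.map φ (g i)) =
      φ (wordDiscriminant w g) := by
  unfold wordDiscriminant
  have h1 : FreeGroup.lift (fun i => Matrix.SpecialLinearGroup.map φ (g i)) w
      = Matrix.SpecialLinearGroup.map φ (FreeGroup.lift g w) := by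
    have := FreeGroup.lift_unique (f := fun i => Matrix.SpecialLinearGroup.map φ (g i))
      ((Matrix.SpecialLinearGroup.map φ).comp (FreeGroup.lift g))
      (fun x => by simp) (x := w)
    rw [← this]
    rfl
  rw [h1]
  have h2 : Matrix.trace ((Matrix.SpecialLinearGroup.map φ (FreeGroup.lift g w) : SL2 F) :
        Matrix (Fin 2) (Fin 2) F)
      = φ (Matrix.trace ((FreeGroup.lift g w : SL2 K) : Matrix (Fin 2) (Fin 2) K)) := by
    rw [Matrix.trace_fin_two, Matrix.trace_fin_two, map_add]
    congr 1 <;>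
      simp [Matrix.SpecialLinearGroup.map_apply_coe, RingHom.mapMatrix_apply, Matrix.map_apply]
  rw [h2, map_sub, map_pow]
  congr 1
  exact (map_ofNat φ 4).symm

lemma main {K F : Type*} [NormedField K] [Field F] (φ : K →+* F) {d : ℕ}
    (w : FreeGroup (Fin d)) (hw : w ≠ 1)
    (hint : ∀ m : ℤ, m ≠ 0 → |m| ≤ 2*(d:ℤ) →
      1/(2*(d:ℝ)) ≤ ‖(m:K)‖ ∧ ‖(m:K)‖ ≤ 2*(d:ℝ))
    (hsq : ∀ τ : K, 2 < ‖τ‖ → ∃ y : K, y ≠ 0 ∧ τ^2-4 = y^2)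
    (hts : ∀ T : ℝ, ∃ t : K, T ≤ ‖t‖) :
    {x : F | x ∈ Set.range (wordDiscriminant w) ∧ ∃ y : F, y ≠ 0 ∧ x = y^2}.Infinite := by
  classical
  obtain ⟨u, v, rfl, hv1, hvcr⟩ := cyc_red_aux w.toWord.length w le_rfl hw
  have hvne : v.toWord ≠ [] := fun h => hv1 (FreeGroup.toWord_eq_nil_iff.mp h)
  obtain ⟨p, L', hL⟩ : ∃ p L', v.toWord = p :: L' := by
    cases h : v.toWord with
    | nil => exact absurd h hvne
    | cons a L' => exact ⟨a, L', rfl⟩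
  have hd1 : 1 ≤ d := p.1.pos
  have hd0 : (0:ℝ) < 4*(d:ℝ) := by
    have : (1:ℝ) ≤ (d:ℝ) := by exact_mod_cast hd1
    linarith
  set SK : Set K :=
    {x : K | x ∈ Set.range (wordDiscriminant (u*v*u⁻¹)) ∧ ∃ y : K, y ≠ 0 ∧ x = y^2} with hSK
  have hSKunb : ∀ C : ℝ, ∃ x ∈ SK, C < ‖x‖ := by
    intro C
    set M : ℝ := max 3 (|C|+5) with hM
    have hM3 : 3 ≤ M := le_max_left _ _
    have hMC : |C|+5 ≤ M := le_max_right _ _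
    obtain ⟨t, ht⟩ := hts (max ((6*(2*(d:ℝ))^2)^(4*v.toWord.length+2)) (4*(d:ℝ)*M))
    have hT1 : (6*(2*(d:ℝ))^2)^(4*v.toWord.length+2) ≤ ‖t‖ := le_trans (le_max_left _ _) ht
    have hT2 : 4*(d:ℝ)*M ≤ ‖t‖ := le_trans (le_max_right _ _) ht
    have htb := trace_big v hv1 hvcr t hint hT1
    set τ : K := Matrix.trace ((FreeGroup.lift (gens t) v : SL2 K) : Matrix (Fin 2) (Fin 2) K)
      with hτ
    have hMτ : M ≤ ‖τ‖ := by
      have h1 : M ≤ ‖t‖/(4*(d:ℝ)) := by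
        rw [le_div_iff₀ hd0]
        calc M * (4*(d:ℝ)) = 4*(d:ℝ)*M := by ring
        _ ≤ ‖t‖ := hT2
      have h2 : M ≤ M^2 := by nlinarith
      have h3 : M^2 ≤ (‖t‖/(4*(d:ℝ)))^2 := by
        apply pow_le_pow_left₀ (by linarith) h1
      linarith
    have hτ2 : 2 < ‖τ‖ := by linarith
    obtain ⟨y, hy0, hysq⟩ := hsq τ hτ2
    refine ⟨τ^2 - 4, ⟨⟨gens t, ?_⟩, y, hy0, hysq⟩, ?_⟩
    · rw [wordDiscriminant_conj]
      rfl
    · have h4 : ‖(4:K)‖ ≤ 4 := by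
        have h5 : ‖((4:ℕ):K)‖ ≤ (4:ℕ) * ‖(1:K)‖ := Nat.norm_cast_le 4
        rw [norm_one] at h5
        simpa using h5
      have htri : ‖τ^2‖ - ‖(4:K)‖ ≤ ‖τ^2 - 4‖ := norm_sub_norm_le _ _
      have hτsq : ‖τ^2‖ = ‖τ‖^2 := norm_pow _ _
      have : M^2 ≤ ‖τ‖^2 := pow_le_pow_left₀ (by linarith) hMτ _
      have hCabs : C ≤ |C| := le_abs_self C
      nlinarith
  have hSKinf : SK.Infinite := by
    by_contra hfin
    rw [Set.not_infinite] at hfin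
    obtain ⟨C, hC⟩ := (hfin.image (fun x => ‖x‖)).bddAbove
    obtain ⟨x, hx, hCx⟩ := hSKunb C
    exact absurd (hC (Set.mem_image_of_mem _ hx)) (not_le.mpr hCx)
  have hinj : Set.InjOn φ SK := fun a _ b _ h => RingHom.injective φ h
  refine Set.Infinite.mono ?_ (hSKinf.image hinj)
  rintro _ ⟨x, ⟨⟨g, hg⟩, y, hy, hxy⟩, rfl⟩
  refine ⟨⟨fun i => Matrix.SpecialLinearGroup.map φ (g i), ?_⟩, φ y, ?_, ?_⟩
  · rw [wordDiscriminant_map, hg]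
  · exact fun h => hy (RingHom.injective φ (by rw [h, map_zero]))
  · rw [hxy, map_pow]

end WDisc
namespace WDisc


lemma real_hint (d : ℕ) : ∀ m : ℤ, m ≠ 0 → |m| ≤ 2*(d:ℤ) →
    1/(2*(d:ℝ)) ≤ ‖(m:ℝ)‖ ∧ ‖(m:ℝ)‖ ≤ 2*(d:ℝ) := by
  intro m hm habs
  have h1 : 1 ≤ |m| := Int.one_le_abs (by exact_mod_cast hm)
  have hnorm : ‖(m:ℝ)‖ = ((|m| : ℤ) : ℝ) := by
    rw [Real.norm_eq_abs, ← Int.cast_abs]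
  have h2 : (1:ℝ) ≤ ((|m| : ℤ) : ℝ) := by exact_mod_cast h1
  have h3 : ((|m| : ℤ) : ℝ) ≤ 2*(d:ℝ) := by exact_mod_cast habs
  constructor
  · rw [hnorm]
    have h4 : (1:ℝ) ≤ 2*(d:ℝ) := by linarith
    calc 1/(2*(d:ℝ)) ≤ 1 := by
          rw [div_le_one (by linarith)]; exact h4
    _ ≤ _ := h2
  · rw [hnorm]; exact h3

lemma real_hsq : ∀ τ : ℝ, 2 < ‖τ‖ → ∃ y : ℝ, y ≠ 0 ∧ τ^2-4 = y^2 := by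
  intro τ hτ
  rw [Real.norm_eq_abs] at hτ
  have hpos : 0 < τ^2 - 4 := by nlinarith [sq_abs τ]
  refine ⟨Real.sqrt (τ^2-4), ?_, ?_⟩
  · have := Real.sqrt_pos.mpr hpos
    linarith
  · rw [Real.sq_sqrt hpos.le]

lemma real_hts : ∀ T : ℝ, ∃ t : ℝ, T ≤ ‖t‖ := by
  intro T
  refine ⟨max T 1, ?_⟩
  rw [Real.norm_eq_abs, abs_of_pos (lt_of_lt_of_le one_pos (le_max_right _ _))]
  exact le_max_left _ _

variable (p : ℕ) [hp : Fact p.Prime]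

lemma padic_norm_int_ge (m : ℤ) (hm : m ≠ 0) : 1/((|m| : ℤ) : ℝ) ≤ ‖(m:ℚ_[p])‖ := by
  have hp1 : 1 < p := hp.out.one_lt
  have hcast : ((m : ℚ) : ℚ_[p]) = (m : ℚ_[p]) := by push_cast; rfl
  have hmq : ((m:ℚ)) ≠ 0 := by exact_mod_cast hm
  have h1 : ‖(m:ℚ_[p])‖ = ((padicNorm p (m:ℚ) : ℚ) : ℝ) := by
    rw [← hcast, Padic.eq_padicNorm]
  rw [h1, padicNorm.eq_zpow_of_nonzero hmq, padicValRat.of_int]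
  set v : ℕ := padicValInt p m with hv
  have hdvd : (p:ℕ)^(padicValNat p m.natAbs) ∣ m.natAbs := pow_padicValNat_dvd
  have hle : (p:ℕ)^(padicValNat p m.natAbs) ≤ m.natAbs :=
    Nat.le_of_dvd (Int.natAbs_pos.mpr hm) hdvd
  have habs : ((|m| : ℤ) : ℝ) = (m.natAbs : ℝ) := by
    rw [Int.abs_eq_natAbs, Int.cast_natCast]
  have hle' : ((p:ℝ))^(v:ℕ) ≤ ((|m| : ℤ) : ℝ) := by
    rw [habs]
    exact_mod_cast hle
  have hpowpos : (0:ℝ) < ((p:ℝ))^(v:ℕ) := by positivity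
  have hRHS : ((((p:ℚ))^(-(v:ℤ)) : ℚ) : ℝ) = ((p:ℝ))^(-(v:ℤ)) := by
    push_cast
    rfl
  rw [show (-(padicValInt p m) : ℤ) = -(v:ℤ) from rfl, hRHS, _root_.zpow_neg, zpow_natCast,
    ← one_div]
  exact one_div_le_one_div_of_le hpowpos hle'

lemma padic_hint (d : ℕ) : ∀ m : ℤ, m ≠ 0 → |m| ≤ 2*(d:ℤ) →
    1/(2*(d:ℝ)) ≤ ‖(m:ℚ_[p])‖ ∧ ‖(m:ℚ_[p])‖ ≤ 2*(d:ℝ) := by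
  intro m hm habs
  have h1 : 1 ≤ |m| := Int.one_le_abs (by exact_mod_cast hm)
  have h2 : (1:ℝ) ≤ ((|m| : ℤ) : ℝ) := by exact_mod_cast h1
  have h3 : ((|m| : ℤ) : ℝ) ≤ 2*(d:ℝ) := by exact_mod_cast habs
  constructor
  · calc 1/(2*(d:ℝ)) ≤ 1/((|m| : ℤ) : ℝ) := by
          apply one_div_le_one_div_of_le (by linarith) h3
    _ ≤ _ := padic_norm_int_ge p m hm
  · calc ‖(m:ℚ_[p])‖ ≤ 1 := Padic.norm_int_le_one m
    _ ≤ 2*(d:ℝ) := by linarith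

lemma padic_hsq : ∀ τ : ℚ_[p], 2 < ‖τ‖ → ∃ y : ℚ_[p], y ≠ 0 ∧ τ^2-4 = y^2 := by
  intro τ hτ
  have hτ0 : τ ≠ 0 := by
    intro h; rw [h, norm_zero] at hτ; linarith
  have hτ1 : 1 < ‖τ‖ := by linarith
  set u : ℚ_[p] := 4/τ^2 with hu
  have h4 : (4:ℚ_[p]) = ((4:ℤ) : ℚ_[p]) := by push_cast; rfl
  have h4n : ‖(4:ℚ_[p])‖ ≤ 1 := by rw [h4]; exact Padic.norm_int_le_one 4
  have h40 : (4:ℚ_[p]) ≠ 0 := by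
    have : ((4:ℤ) : ℚ_[p]) ≠ 0 := Int.cast_ne_zero.mpr (by norm_num)
    rwa [← h4] at this
  have hτsq : ‖τ^2‖ = ‖τ‖^2 := norm_pow _ _
  have huval : ‖u‖ = ‖(4:ℚ_[p])‖/‖τ‖^2 := by
    rw [hu, norm_div, hτsq]
  have hun : ‖u‖ < ‖(4:ℚ_[p])‖ := by
    rw [huval]
    rw [div_lt_iff₀ (by positivity)]
    have h4pos : 0 < ‖(4:ℚ_[p])‖ := norm_pos_iff.mpr h40
    nlinarith [sq_nonneg (‖τ‖ - 2)]
  have hu1 : ‖u‖ < 1 := lt_of_lt_of_le hun h4n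
  set c : ℚ_[p] := 1 - u with hc
  have hcnorm : ‖c‖ ≤ 1 := by
    have h := Padic.nonarchimedean (1 : ℚ_[p]) (-u)
    have e : (1 : ℚ_[p]) + (-u) = c := by rw [hc]; ring
    rw [e] at h
    refine le_trans h ?_
    rw [norm_neg, norm_one]
    exact max_le le_rfl hu1.le
  have hc0 : c ≠ 0 := by
    intro h0
    have : u = 1 := by
      have := hc ▸ h0
      linear_combination -this
    rw [this, norm_one] at hu1
    linarith
  set c' : ℤ_[p] := ⟨c, hcnorm⟩ with hc'
  set Fp : Polynomial ℤ_[p] := Polynomial.X^2 - Polynomial.C c' with hFp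
  have heval1 : Fp.eval 1 = 1 - c' := by rw [hFp]; simp
  have hderiv : Fp.derivative = Polynomial.C 2 * Polynomial.X := by
    rw [hFp]
    simp
    rw [one_add_one_eq_two, map_ofNat]
  have hderiv1 : Fp.derivative.eval 1 = 2 := by rw [hderiv]; simp
  have hucoe : ((1 - c' : ℤ_[p]) : ℚ_[p]) = u := by
    rw [PadicInt.coe_sub, PadicInt.coe_one, show ((c' : ℤ_[p]) : ℚ_[p]) = c from rfl, hc]
    ring
  have hnorm1 : ‖Fp.eval 1‖ = ‖u‖ := by
    rw [heval1, PadicInt.norm_def, hucoe]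
  have hnorm2 : ‖Fp.derivative.eval 1‖^2 = ‖(4:ℚ_[p])‖ := by
    rw [hderiv1, PadicInt.norm_def]
    have : ((2:ℤ_[p]) : ℚ_[p]) = (2:ℚ_[p]) := by push_cast; rfl
    rw [this, ← norm_pow]
    norm_num
  have hhyp : ‖Fp.eval 1‖ < ‖Fp.derivative.eval 1‖^2 := by
    rw [hnorm1, hnorm2]; exact hun
  obtain ⟨z, hz, -⟩ := hensels_lemma hhyp
  have hzsq : z^2 = c' := by
    have : z^2 - c' = 0 := by
      have := hz
      rw [hFp] at this
      simpa using this
    linear_combination this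
  have hzcoe : ((z:ℚ_[p]))^2 = c := by
    have := congrArg (fun w : ℤ_[p] => (w : ℚ_[p])) hzsq
    push_cast at this
    exact this
  have hzne : (z:ℚ_[p]) ≠ 0 := by
    intro h0
    apply hc0
    rw [← hzcoe, h0]
    ring
  refine ⟨τ * (z:ℚ_[p]), mul_ne_zero hτ0 hzne, ?_⟩
  have hτsq0 : τ^2 ≠ 0 := pow_ne_zero _ hτ0
  calc τ^2 - 4 = τ^2 * (1 - 4/τ^2) := by field_simp
  _ = τ^2 * c := by rw [hc, hu]
  _ = (τ * (z:ℚ_[p]))^2 := by rw [← hzcoe]; ring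

lemma padic_hts : ∀ T : ℝ, ∃ t : ℚ_[p], T ≤ ‖t‖ := by
  intro T
  have hp1 : (1:ℝ) < (p:ℝ) := by exact_mod_cast hp.out.one_lt
  obtain ⟨n, hn⟩ := pow_unbounded_of_one_lt T hp1
  refine ⟨(p:ℚ_[p])^(-(n:ℤ)), ?_⟩
  rw [Padic.norm_p_zpow, neg_neg, zpow_natCast]
  exact hn.le

end WDisc

/-- If `F` admits a ring homomorphism from `ℝ` or from some `ℚ_p`, and `w` is a nontrivial word,
then infinitely many squares of nonzero elements of `F` are values of the discriminant `Δ`. -/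
theorem discriminant_squares_infinite {F : Type*} [Field F]
    (hF : Nonempty (ℝ →+* F) ∨ ∃ (p : ℕ) (hp : Fact p.Prime), Nonempty (@Padic p hp →+* F))
    {d : ℕ} (w : FreeGroup (Fin d)) (hw : w ≠ 1) :
    {x : F | x ∈ Set.range (wordDiscriminant w) ∧ ∃ y : F, y ≠ 0 ∧ x = y ^ 2}.Infinite := by
  rcases hF with hφ | ⟨p, hp, hφ⟩
  · obtain ⟨φ⟩ := hφ
    exact WDisc.main φ w hw (WDisc.real_hint d) WDisc.real_hsq WDisc.real_hts
  · haveI := hp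
    obtain ⟨φ⟩ := hφ
    exact WDisc.main φ w hw (WDisc.padic_hint p d) (WDisc.padic_hsq p) (WDisc.padic_hts p)
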